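/- The average sufficient statistic t̄ lies in the relative interior relint(C) of the polytope C if and only if the empirical KLIEP loss ℓ attains a global minimum, i.e., there exists Δ₀ ∈ ℝ^k such that ℓ(Δ₀) ≤ ℓ(Δ) for all Δ ∈ ℝ^k. (Theorem 1(i).) -/

import Mathlib

open scoped RealInnerProductSpace

/-- The empirical KLIEP loss
`ℓ(Δ) = -⟪Δ, t̄⟫ + log((1/n) ∑_j exp ⟪Δ, t_j⟫)`. -/
noncomputable def kliepLoss {k n : ℕ} (tbar : EuclideanSpace ℝ (Fin k))
    (t : Fin n → EuclideanSpace ℝ (Fin k)) (Δ : EuclideanSpace ℝ (Fin k)) : ℝ :=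
  -⟪Δ, tbar⟫ + Real.log ((1 / (n : ℝ)) * ∑ j, Real.exp ⟪Δ, t j⟫)

section KliepAux

open Finset Set

lemma kliep_mem_convexHull_range_iff {n : ℕ} {E : Type*} [AddCommGroup E] [Module ℝ E]
    (t : Fin n → E) (x : E) :
    x ∈ convexHull ℝ (Set.range t) ↔
      ∃ w : Fin n → ℝ, (∀ j, 0 ≤ w j) ∧ ∑ j, w j = 1 ∧ ∑ j, w j • t j = x := by
  constructor
  · intro hx
    rw [convexHull_range_eq_exists_affineCombination] at hx
    obtain ⟨s, w, hw0, hw1, hx⟩ := hx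
    refine ⟨fun j => if j ∈ s then w j else 0, fun j => ?_, ?_, ?_⟩
    · by_cases h : j ∈ s <;> simp [h, hw0 j]
    · rw [Finset.sum_ite_mem, Finset.univ_inter, hw1]
    · rw [← hx, affineCombination_eq_linear_combination s t w hw1]
      simp only [ite_smul, zero_smul]
      rw [Finset.sum_ite_mem, Finset.univ_inter]
  · rintro ⟨w, hw0, hw1, rfl⟩
    exact mem_convexHull_of_exists_fintype w t hw0 hw1 (fun i => Set.mem_range_self i) rfl


variable {k n : ℕ}

local notation "E" => EuclideanSpace ℝ (Fin k)

lemma kliep_span_ball_subset (u : Fin n → E)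
    (w : Fin n → ℝ) (hw : ∀ j, 0 < w j) (hw1 : ∑ j, w j = 1) (h0 : ∑ j, w j • u j = 0) :
    ∃ ε > 0, ∀ v ∈ Submodule.span ℝ (Set.range u), ‖v‖ < ε → v ∈ convexHull ℝ (Set.range u) := by
  have hn : 0 < n := by
    by_contra h
    push_neg at h
    interval_cases n
    simp at hw1
  have hne : (Finset.univ : Finset (Fin n)).Nonempty := univ_nonempty_iff.2 ⟨⟨0, hn⟩⟩
  set V := Submodule.span ℝ (Set.range u) with hV
  -- linear map sending coefficients to combination
  let L : (Fin n → ℝ) →ₗ[ℝ] E :=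
    { toFun := fun a => ∑ j, a j • u j
      map_add' := by intro a b; simp [add_smul, Finset.sum_add_distrib]
      map_smul' := by intro c a; simp [smul_smul, Finset.smul_sum]
    }
  let σ : (Fin n → ℝ) →ₗ[ℝ] ℝ :=
    { toFun := fun a => ∑ j, a j
      map_add' := by intro a b; simp [Finset.sum_add_distrib]
      map_smul' := by intro c a; simp [Finset.mul_sum]
    }
  set W := LinearMap.ker σ with hW
  have hLV : ∀ a : Fin n → ℝ, L a ∈ V := by
    intro a
    show ∑ j, a j • u j ∈ V
    exact Submodule.sum_mem _ fun j _ =>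
      Submodule.smul_mem _ _ (Submodule.subset_span (Set.mem_range_self j))
  let M : W →ₗ[ℝ] V := (L.comp W.subtype).codRestrict V (fun a => hLV _)
  let Mc : W →L[ℝ] V := LinearMap.toContinuousLinearMap M
  have hsurj : Function.Surjective Mc := by
    intro v
    have hv : (v : E) ∈ V := v.2
    obtain ⟨c, hc⟩ := (Submodule.mem_span_range_iff_exists_fun ℝ).1 hv
    refine ⟨⟨c - (∑ j, c j) • w, ?_⟩, ?_⟩
    · simp only [hW, LinearMap.mem_ker]
      show ∑ j, (c j - (∑ i, c i) * w j) = 0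
      rw [Finset.sum_sub_distrib, ← Finset.mul_sum, hw1, mul_one, sub_self]
    · apply Subtype.ext
      show ∑ j, (c j - (∑ i, c i) * w j) • u j = (v : E)
      simp only [sub_smul, Finset.sum_sub_distrib, mul_smul, ← Finset.smul_sum, h0, smul_zero,
        sub_zero, hc]
  have hopen : IsOpenMap Mc := Mc.isOpenMap hsurj
  set wmin := Finset.univ.inf' hne w with hwmin
  have hwminpos : 0 < wmin := (Finset.lt_inf'_iff hne).2 fun j _ => hw j
  have hopen2 : IsOpen (Mc '' Metric.ball (0 : W) wmin) := hopen _ Metric.isOpen_ball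
  have h0mem : (0 : V) ∈ Mc '' Metric.ball (0 : W) wmin :=
    ⟨0, by simpa using hwminpos, by simp⟩
  obtain ⟨ε, hε, hball⟩ := Metric.isOpen_iff.1 hopen2 _ h0mem
  refine ⟨ε, hε, fun v hvV hvn => ?_⟩
  have : (⟨v, hvV⟩ : V) ∈ Metric.ball (0 : V) ε := by
    rw [Metric.mem_ball, dist_zero_right]
    exact hvn
  obtain ⟨a, haU, hMa⟩ := hball this
  rw [Metric.mem_ball, dist_zero_right] at haU
  rw [kliep_mem_convexHull_range_iff]
  refine ⟨fun j => w j + (a : Fin n → ℝ) j, fun j => ?_, ?_, ?_⟩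
  · have h1 : |(a : Fin n → ℝ) j| ≤ ‖(a : Fin n → ℝ)‖ := by
      simpa using norm_le_pi_norm (a : Fin n → ℝ) j
    have h2 : ‖(a : Fin n → ℝ)‖ < wmin := haU
    have h3 : wmin ≤ w j := Finset.inf'_le _ (Finset.mem_univ j)
    show 0 ≤ w j + (a : Fin n → ℝ) j
    nlinarith [abs_le.1 h1]
  · have ha0 : ∑ j, (a : Fin n → ℝ) j = 0 := a.2
    rw [Finset.sum_add_distrib, hw1, ha0, add_zero]
  · have hMav : ∑ j, (a : Fin n → ℝ) j • u j = v := congrArg Subtype.val hMa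
    simp only [add_smul, Finset.sum_add_distrib, h0, zero_add, hMav]
lemma kliep_zero_mem_relint (u : Fin n → E)
    (w : Fin n → ℝ) (hw : ∀ j, 0 < w j) (hw1 : ∑ j, w j = 1) (h0 : ∑ j, w j • u j = 0) :
    (0 : E) ∈ intrinsicInterior ℝ (convexHull ℝ (Set.range u)) := by
  obtain ⟨ε, hε, hsub⟩ := kliep_span_ball_subset u w hw hw1 h0
  have h0mem : (0 : E) ∈ convexHull ℝ (Set.range u) :=
    (kliep_mem_convexHull_range_iff u 0).2 ⟨w, fun j => (hw j).le, hw1, h0⟩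
  have h0aff : (0 : E) ∈ affineSpan ℝ (convexHull ℝ (Set.range u)) :=
    subset_affineSpan ℝ _ h0mem
  rw [mem_intrinsicInterior]
  refine ⟨⟨0, h0aff⟩, ?_, rfl⟩
  rw [mem_interior_iff_mem_nhds, Metric.mem_nhds_iff]
  refine ⟨ε, hε, ?_⟩
  rintro ⟨a, ha⟩ hball
  have hdist : ‖a‖ < ε := by
    have := Metric.mem_ball.1 hball
    rw [Subtype.dist_eq, dist_zero_right] at this
    exact this
  have haspan : a ∈ Submodule.span ℝ (Set.range u) := by
    have h1 : a ∈ (affineSpan ℝ (Set.range u) : Set (EuclideanSpace ℝ (Fin k))) := by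
      have := affineSpan_convexHull (𝕜 := ℝ) (s := Set.range u)
      rw [← this]
      exact ha
    exact affineSpan_subset_span h1
  exact hsub a haspan hdist
lemma kliep_relint_weights (hn : 1 ≤ n) (u : Fin n → E)
    (h : (0 : E) ∈ intrinsicInterior ℝ (convexHull ℝ (Set.range u))) :
    ∃ w : Fin n → ℝ, (∀ j, 0 < w j) ∧ ∑ j, w j = 1 ∧ ∑ j, w j • u j = 0 := by
  rw [mem_intrinsicInterior] at h
  obtain ⟨⟨y, hyaff⟩, hyint, hy0⟩ := h
  simp only at hy0
  subst hy0
  -- centroid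
  set c : E := ∑ j, (n : ℝ)⁻¹ • u j with hc
  have hnR : (0:ℝ) < n := by exact_mod_cast hn
  have hcmem : c ∈ convexHull ℝ (Set.range u) := by
    rw [kliep_mem_convexHull_range_iff]
    exact ⟨fun _ => (n : ℝ)⁻¹, fun j => by positivity, by
      rw [Finset.sum_const, Finset.card_univ, Fintype.card_fin, nsmul_eq_mul,
        mul_inv_cancel₀ (ne_of_gt hnR)], rfl⟩
  have hcaff : c ∈ affineSpan ℝ (convexHull ℝ (Set.range u)) := subset_affineSpan ℝ _ hcmem
  -- the path ε ↦ -ε • c inside the affine span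
  set A := affineSpan ℝ (convexHull ℝ (Set.range u))
  have hpath : ∀ ε : ℝ, (-ε) • c ∈ A := by
    intro ε
    have := AffineSubspace.smul_vsub_vadd_mem A (-ε) hcaff hyaff hyaff
    simpa using this
  let γ : ℝ → A := fun ε => ⟨(-ε) • c, hpath ε⟩
  have hγcont : Continuous γ := by
    apply Continuous.subtype_mk
    exact (continuous_neg.smul continuous_const)
  have hγ0 : γ 0 ∈ interior (((↑) : A → E) ⁻¹' convexHull ℝ (Set.range u)) := by
    have : γ 0 = ⟨0, hyaff⟩ := by simp [γ]
    rw [this]; exact hyint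
  have hopen : IsOpen (γ ⁻¹' interior (((↑) : A → E) ⁻¹' convexHull ℝ (Set.range u))) :=
    hγcont.isOpen_preimage _ isOpen_interior
  obtain ⟨ε, hεpos, hεball⟩ := Metric.isOpen_iff.1 hopen 0 hγ0
  have hεmem : γ (ε/2) ∈ interior (((↑) : A → E) ⁻¹' convexHull ℝ (Set.range u)) := by
    apply hεball
    rw [Metric.mem_ball, Real.dist_eq]
    rw [sub_zero, abs_of_pos (by linarith)]
    linarith
  have hymem : (-(ε/2)) • c ∈ convexHull ℝ (Set.range u) := by
    have h' := interior_subset hεmem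
    exact h'
  rw [kliep_mem_convexHull_range_iff] at hymem
  obtain ⟨q, hq0, hq1, hqc⟩ := hymem
  set δ := ε/2 with hδ
  have hδpos : 0 < δ := by positivity
  refine ⟨fun j => (q j + δ/n) / (1 + δ), fun j => ?_, ?_, ?_⟩
  · have := hq0 j; positivity
  · rw [← Finset.sum_div, Finset.sum_add_distrib, hq1, Finset.sum_const, Finset.card_univ,
      Fintype.card_fin, nsmul_eq_mul]
    field_simp
  · have e1 : ∀ j, ((q j + δ/n) / (1 + δ)) • u j
        = (1 + δ)⁻¹ • ((q j • u j) + (δ * (n : ℝ)⁻¹) • u j) := by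
      intro j
      rw [← add_smul, smul_smul, div_eq_inv_mul, div_eq_mul_inv]
    rw [Finset.sum_congr rfl (fun j _ => e1 j), ← Finset.smul_sum, Finset.sum_add_distrib]
    have e2 : ∑ j, (δ * (n : ℝ)⁻¹) • u j = δ • c := by
      rw [hc, Finset.smul_sum]
      simp [mul_smul]
    rw [e2, hqc, neg_smul, neg_add_cancel, smul_zero]
open scoped RealInnerProductSpace in
lemma kliep_exists_min (hn : 1 ≤ n) (u : Fin n → E)
    (w : Fin n → ℝ) (hw : ∀ j, 0 < w j) (h0 : ∑ j, w j • u j = 0) :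
    ∃ Δ₀ : E, ∀ Δ : E, ∑ j, Real.exp ⟪Δ₀, u j⟫ ≤ ∑ j, Real.exp ⟪Δ, u j⟫ := by
  have hne : (Finset.univ : Finset (Fin n)).Nonempty := univ_nonempty_iff.2 ⟨⟨0, hn⟩⟩
  by_cases hu : ∀ j, u j = 0
  · exact ⟨0, fun Δ => by simp [hu]⟩
  push_neg at hu
  obtain ⟨j₀, hj₀⟩ := hu
  set V := Submodule.span ℝ (Set.range u) with hV
  have huV : ∀ j, u j ∈ V := fun j => Submodule.subset_span (Set.mem_range_self j)
  -- the function F on the sphere of V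
  set F : V → ℝ := fun x => Finset.univ.sup' hne (fun j => ⟪(x : E), u j⟫) with hF
  have hFcont : Continuous F := by
    rw [continuous_iff_continuousAt]
    intro x
    exact Filter.Tendsto.finset_sup'_nhds_apply hne
      (fun j _ => ((continuous_subtype_val.inner continuous_const).tendsto x))
  have hFpos : ∀ x ∈ Metric.sphere (0 : V) 1, 0 < F x := by
    intro x hx
    by_contra h
    push_neg at h
    have hle : ∀ j, ⟪(x : E), u j⟫ ≤ 0 := fun j =>
      le_trans (Finset.le_sup' (fun j => ⟪(x : E), u j⟫) (Finset.mem_univ j)) h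
    have hsum0 : ∑ j, w j * ⟪(x : E), u j⟫ = 0 := by
      have h1 : ⟪(x : E), ∑ j, w j • u j⟫ = 0 := by rw [h0, inner_zero_right]
      rw [inner_sum] at h1
      rw [← h1]
      exact Finset.sum_congr rfl fun j _ => (real_inner_smul_right _ _ _).symm
    have hzero : ∀ j, ⟪(x : E), u j⟫ = 0 := by
      intro j
      have := (Finset.sum_eq_zero_iff_of_nonpos
        (fun i _ => mul_nonpos_of_nonneg_of_nonpos (hw i).le (hle i))).1 hsum0 j (Finset.mem_univ j)
      rcases mul_eq_zero.1 this with h' | h'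
      · exact absurd h' (ne_of_gt (hw j))
      · exact h'
    have hxx : ⟪(x : E), (x : E)⟫ = 0 := by
      obtain ⟨c, hc⟩ := (Submodule.mem_span_range_iff_exists_fun ℝ).1 x.2
      calc ⟪(x : E), (x : E)⟫ = ⟪(x : E), ∑ j, c j • u j⟫ := by rw [hc]
        _ = ∑ j, c j * ⟪(x : E), u j⟫ := by
            rw [inner_sum]
            exact Finset.sum_congr rfl fun j _ => real_inner_smul_right _ _ _
        _ = 0 := by simp [hzero]
    have : (x : E) = 0 := inner_self_eq_zero.1 hxx
    have hx1 : ‖x‖ = 1 := by simpa using hx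
    rw [show ‖x‖ = ‖(x : E)‖ from rfl, this] at hx1
    simp at hx1
  -- minimum of F over the sphere
  have hsne : (Metric.sphere (0 : V) 1).Nonempty := by
    refine ⟨⟨‖u j₀‖⁻¹ • u j₀, Submodule.smul_mem _ _ (huV j₀)⟩, ?_⟩
    simp only [mem_sphere_iff_norm, sub_zero]
    show ‖(‖u j₀‖⁻¹ • u j₀ : E)‖ = 1
    rw [norm_smul, norm_inv, norm_norm, inv_mul_cancel₀ (norm_ne_zero_iff.2 hj₀)]
  obtain ⟨xs, hxsS, hxsmin⟩ := (isCompact_sphere (0 : V) 1).exists_isMinOn hsne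
    hFcont.continuousOn
  set c := F xs with hc
  have hcpos : 0 < c := hFpos xs hxsS
  -- coercivity
  have hcoer : ∀ v : V, ∃ j, c * ‖(v : E)‖ ≤ ⟪(v : E), u j⟫ := by
    intro v
    rcases eq_or_ne v 0 with rfl | hv
    · exact ⟨j₀, by simp⟩
    · have hvn : (0:ℝ) < ‖(v : E)‖ := by
        rw [norm_pos_iff]
        exact fun h => hv (Subtype.ext h)
      set x : V := (‖(v : E)‖⁻¹ : ℝ) • v with hx
      have hxS : x ∈ Metric.sphere (0 : V) 1 := by
        simp only [mem_sphere_iff_norm, sub_zero]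
        have : ‖x‖ = ‖(x : E)‖ := rfl
        rw [this]
        have hco : ((x : E)) = ‖(v : E)‖⁻¹ • (v : E) := rfl
        rw [hco, norm_smul, norm_inv, norm_norm, inv_mul_cancel₀ (ne_of_gt hvn)]
      have hcF : c ≤ F x := isMinOn_iff.1 hxsmin x hxS
      obtain ⟨j, _, hj⟩ := Finset.exists_mem_eq_sup' hne (fun j => ⟪(x : E), u j⟫)
      refine ⟨j, ?_⟩
      have hFx : F x = ⟪(x : E), u j⟫ := hj
      have hinner : ⟪(x : E), u j⟫ = ‖(v : E)‖⁻¹ * ⟪(v : E), u j⟫ := by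
        have hco : ((x : E)) = ‖(v : E)‖⁻¹ • (v : E) := rfl
        rw [hco, real_inner_smul_left]
      have : c ≤ ‖(v : E)‖⁻¹ * ⟪(v : E), u j⟫ := by rw [← hinner, ← hFx]; exact hcF
      calc c * ‖(v : E)‖ ≤ (‖(v : E)‖⁻¹ * ⟪(v : E), u j⟫) * ‖(v : E)‖ := by
            exact mul_le_mul_of_nonneg_right this hvn.le
        _ = ⟪(v : E), u j⟫ := by field_simp
  -- compact minimization
  set R := Real.log (n + 1) / c with hR
  have hRnn : 0 ≤ R := div_nonneg (Real.log_nonneg (by exact_mod_cast Nat.le_add_left 1 n)) hcpos.le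
  set K : Set E := (V : Set E) ∩ Metric.closedBall 0 R with hK
  have hKclosed : IsClosed K :=
    (Submodule.closed_of_finiteDimensional V).inter Metric.isClosed_closedBall
  have hKcompact : IsCompact K :=
    (isCompact_closedBall (0 : E) R).of_isClosed_subset hKclosed Set.inter_subset_right
  have hK0 : (0 : E) ∈ K := ⟨V.zero_mem, by simp [hRnn]⟩
  set g : E → ℝ := fun Δ => ∑ j, Real.exp ⟪Δ, u j⟫ with hg
  have hgcont : Continuous g := by
    apply continuous_finset_sum
    intro j _
    exact Real.continuous_exp.comp (continuous_id.inner continuous_const)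
  obtain ⟨Δ₀, hΔ₀K, hΔ₀min⟩ := hKcompact.exists_isMinOn ⟨0, hK0⟩ hgcont.continuousOn
  refine ⟨Δ₀, fun Δ => ?_⟩
  show g Δ₀ ≤ g Δ
  set p : V := V.orthogonalProjectionOnto Δ with hp
  have hkey : ∀ j, ⟪Δ, u j⟫ = ⟪(p : E), u j⟫ := by
    intro j
    have h1 : ⟪Δ - (p : E), u j⟫ = 0 := V.starProjection_inner_eq_zero Δ (u j) (huV j)
    rw [inner_sub_left] at h1
    linarith [h1]
  have hgeq : g Δ = g (p : E) := by
    apply Finset.sum_congr rfl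
    intro j _
    rw [hkey j]
  rcases le_or_gt ‖(p : E)‖ R with hle | hgt
  · have hpK : (p : E) ∈ K := ⟨SetLike.coe_mem p, by simpa using hle⟩
    calc g Δ₀ ≤ g (p : E) := isMinOn_iff.1 hΔ₀min _ hpK
      _ = g Δ := hgeq.symm
  · obtain ⟨j, hj⟩ := hcoer p
    have h1 : Real.exp ⟪(p : E), u j⟫ ≤ g (p : E) := by
      apply Finset.single_le_sum (f := fun j => Real.exp ⟪(p : E), u j⟫)
        (fun i _ => (Real.exp_pos _).le) (Finset.mem_univ j)
    have h2 : Real.log (n + 1) < c * ‖(p : E)‖ := by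
      have : Real.log (n+1) = c * R := by rw [hR]; field_simp
      rw [this]
      exact mul_lt_mul_of_pos_left hgt hcpos
    have h3 : (n : ℝ) + 1 ≤ Real.exp ⟪(p : E), u j⟫ := by
      have := Real.exp_le_exp.2 (le_trans h2.le hj)
      rw [Real.exp_log (by positivity)] at this
      linarith
    have h4 : g Δ₀ ≤ (n : ℝ) := by
      have h5 : g Δ₀ ≤ g 0 := isMinOn_iff.1 hΔ₀min 0 hK0
      have hg0 : g 0 = n := by simp [hg]
      linarith
    rw [hgeq]
    linarith
open scoped RealInnerProductSpace in
lemma kliep_min_weights (hn : 1 ≤ n) (u : Fin n → E) (Δ₀ : E)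
    (hmin : ∀ Δ : E, ∑ j, Real.exp ⟪Δ₀, u j⟫ ≤ ∑ j, Real.exp ⟪Δ, u j⟫) :
    ∃ w : Fin n → ℝ, (∀ j, 0 < w j) ∧ ∑ j, w j = 1 ∧ ∑ j, w j • u j = 0 := by
  have hne : (Finset.univ : Finset (Fin n)).Nonempty := univ_nonempty_iff.2 ⟨⟨0, hn⟩⟩
  set v : E := ∑ j, Real.exp ⟪Δ₀, u j⟫ • u j with hv
  -- the derivative of ε ↦ ∑ exp(⟪Δ₀,u j⟫ + ε * ⟪v, u j⟫) at 0 vanishes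
  set φ : ℝ → ℝ := fun ε => ∑ j, Real.exp (⟪Δ₀, u j⟫ + ε * ⟪v, u j⟫) with hφ
  have hder : HasDerivAt φ (∑ j, ⟪v, u j⟫ * Real.exp ⟪Δ₀, u j⟫) 0 := by
    have h2 : HasDerivAt φ
        (∑ j, Real.exp (⟪Δ₀, u j⟫ + 0 * ⟪v, u j⟫) * ⟪v, u j⟫) 0 := by
      apply HasDerivAt.fun_sum
      intro j _
      have h1 : HasDerivAt (fun ε : ℝ => ⟪Δ₀, u j⟫ + ε * ⟪v, u j⟫) (⟪v, u j⟫) 0 := by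
        simpa using ((hasDerivAt_id (0:ℝ)).mul_const (⟪v, u j⟫)).const_add (⟪Δ₀, u j⟫)
      exact h1.exp
    simpa [mul_comm] using h2
  have hφeq : ∀ ε : ℝ, φ ε = ∑ j, Real.exp ⟪Δ₀ + ε • v, u j⟫ := by
    intro ε
    apply Finset.sum_congr rfl
    intro j _
    rw [inner_add_left, real_inner_smul_left]
  have hlocmin : IsLocalMin φ 0 := by
    apply Filter.Eventually.of_forall
    intro ε
    have h1 := hmin (Δ₀ + ε • v)
    rw [hφeq ε, hφeq 0]
    simpa using h1
  have hdzero : ∑ j, ⟪v, u j⟫ * Real.exp ⟪Δ₀, u j⟫ = 0 :=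
    hlocmin.hasDerivAt_eq_zero hder
  have hvzero : v = 0 := by
    rw [← inner_self_eq_zero (𝕜 := ℝ)]
    calc ⟪v, v⟫ = ∑ j, Real.exp ⟪Δ₀, u j⟫ * ⟪v, u j⟫ := by
          rw [hv, inner_sum]
          exact Finset.sum_congr rfl fun j _ => real_inner_smul_right _ _ _
      _ = 0 := by rw [← hdzero]; exact Finset.sum_congr rfl fun j _ => mul_comm _ _
  have hWpos : 0 < ∑ j, Real.exp ⟪Δ₀, u j⟫ := Finset.sum_pos (fun j _ => Real.exp_pos _) hne
  refine ⟨fun j => Real.exp ⟪Δ₀, u j⟫ / (∑ i, Real.exp ⟪Δ₀, u i⟫),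
    fun j => div_pos (Real.exp_pos _) hWpos, ?_, ?_⟩
  · rw [← Finset.sum_div, div_self (ne_of_gt hWpos)]
  · have h7 : ∑ j, (Real.exp ⟪Δ₀, u j⟫ / (∑ i, Real.exp ⟪Δ₀, u i⟫)) • u j
        = (∑ i, Real.exp ⟪Δ₀, u i⟫)⁻¹ • ∑ j, Real.exp ⟪Δ₀, u j⟫ • u j := by
      rw [Finset.smul_sum]
      exact Finset.sum_congr rfl fun j _ => by rw [div_eq_inv_mul, mul_smul]
    rw [h7, ← hv, hvzero, smul_zero]

lemma kliep_relint_translate (tbar : E) (t : Fin n → E) :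
    tbar ∈ intrinsicInterior ℝ (convexHull ℝ (Set.range t)) ↔
      (0 : E) ∈ intrinsicInterior ℝ (convexHull ℝ (Set.range fun j => t j - tbar)) := by
  set φ : E ≃ᵃⁱ[ℝ] E := AffineIsometryEquiv.constVAdd ℝ E (-tbar) with hφ
  have hmap : ∀ x : E, φ x = x - tbar := by
    intro x
    show -tbar +ᵥ x = x - tbar
    rw [vadd_eq_add, neg_add_eq_sub]
  have h2 : (⇑φ.toAffineIsometry) '' Set.range t = Set.range fun j => t j - tbar := by
    rw [← Set.range_comp]
    have : (⇑φ.toAffineIsometry) ∘ t = fun j => t j - tbar := funext fun j => hmap (t j)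
    rw [this]
  have himg : (⇑φ.toAffineIsometry) '' convexHull ℝ (Set.range t)
      = convexHull ℝ (Set.range fun j => t j - tbar) := by
    rw [← AffineIsometry.coe_toAffineMap, AffineMap.image_convexHull,
      AffineIsometry.coe_toAffineMap, h2]
  constructor
  · intro h
    have h3 : φ tbar ∈ (⇑φ.toAffineIsometry) '' intrinsicInterior ℝ (convexHull ℝ (Set.range t)) :=
      Set.mem_image_of_mem _ h
    rw [← AffineIsometry.image_intrinsicInterior, himg] at h3
    have h4 : φ tbar = 0 := by rw [hmap, sub_self]
    rwa [h4] at h3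
  · intro h
    rw [← himg, AffineIsometry.image_intrinsicInterior] at h
    obtain ⟨x, hx, hx0⟩ := h
    have : x = tbar := by
      have := hmap x
      rw [show φ.toAffineIsometry x = φ x from rfl] at hx0
      rw [hx0] at this
      linear_combination (norm := module) -this
    rwa [this] at hx

open scoped RealInnerProductSpace in
lemma kliep_loss_iff (hn : 1 ≤ n) (tbar : E) (t : Fin n → E) (Δ₀ : E) :
    (∀ Δ, kliepLoss tbar t Δ₀ ≤ kliepLoss tbar t Δ) ↔
      (∀ Δ, ∑ j, Real.exp ⟪Δ₀, t j - tbar⟫ ≤ ∑ j, Real.exp ⟪Δ, t j - tbar⟫) := by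
  have hne : (Finset.univ : Finset (Fin n)).Nonempty := univ_nonempty_iff.2 ⟨⟨0, hn⟩⟩
  have hnR : (0:ℝ) < n := by exact_mod_cast hn
  have hgpos : ∀ Δ : E, 0 < ∑ j, Real.exp ⟪Δ, t j - tbar⟫ :=
    fun Δ => Finset.sum_pos (fun j _ => Real.exp_pos _) hne
  have hkey : ∀ Δ : E, kliepLoss tbar t Δ
      = Real.log (1/(n:ℝ)) + Real.log (∑ j, Real.exp ⟪Δ, t j - tbar⟫) := by
    intro Δ
    unfold kliepLoss
    have hsum : ∑ j, Real.exp ⟪Δ, t j⟫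
        = Real.exp ⟪Δ, tbar⟫ * ∑ j, Real.exp ⟪Δ, t j - tbar⟫ := by
      rw [Finset.mul_sum]
      exact Finset.sum_congr rfl fun j _ => by
        rw [← Real.exp_add, ← inner_add_right, add_sub_cancel]
    rw [hsum, show (1/(n:ℝ)) * (Real.exp ⟪Δ, tbar⟫ * ∑ j, Real.exp ⟪Δ, t j - tbar⟫)
        = Real.exp ⟪Δ, tbar⟫ * ((1/(n:ℝ)) * ∑ j, Real.exp ⟪Δ, t j - tbar⟫) by ring,
      Real.log_mul (Real.exp_ne_zero _) (by positivity), Real.log_exp,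
      Real.log_mul (by positivity) (ne_of_gt (hgpos Δ))]
    ring
  constructor
  · intro h Δ
    have := h Δ
    rw [hkey Δ, hkey Δ₀] at this
    have hlog := le_of_add_le_add_left this
    exact (Real.log_le_log_iff (hgpos Δ₀) (hgpos Δ)).1 hlog
  · intro h Δ
    rw [hkey Δ, hkey Δ₀]
    exact add_le_add_right (Real.log_le_log (hgpos Δ₀) (h Δ)) _


end KliepAux

/-- Theorem 1(i): `t̄ ∈ relint(C)` iff the empirical KLIEP loss attains a global minimum. -/
theorem kliep_attains_min_iff_relint {k n : ℕ} (hk : 1 ≤ k) (hn : 1 ≤ n)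
    (tbar : EuclideanSpace ℝ (Fin k)) (t : Fin n → EuclideanSpace ℝ (Fin k)) :
    tbar ∈ intrinsicInterior ℝ (convexHull ℝ (Set.range t)) ↔
      ∃ Δ₀ : EuclideanSpace ℝ (Fin k), ∀ Δ : EuclideanSpace ℝ (Fin k),
        kliepLoss tbar t Δ₀ ≤ kliepLoss tbar t Δ := by
  rw [kliep_relint_translate tbar t]
  constructor
  · intro h
    obtain ⟨w, hw, hw1, h0⟩ := kliep_relint_weights hn (fun j => t j - tbar) h
    obtain ⟨Δ₀, hΔ₀⟩ := kliep_exists_min hn (fun j => t j - tbar) w hw h0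
    exact ⟨Δ₀, (kliep_loss_iff hn tbar t Δ₀).2 hΔ₀⟩
  · rintro ⟨Δ₀, hΔ₀⟩
    obtain ⟨w, hw, hw1, h0⟩ := kliep_min_weights hn (fun j => t j - tbar) Δ₀
      ((kliep_loss_iff hn tbar t Δ₀).1 hΔ₀)
    exact kliep_zero_mem_relint (fun j => t j - tbar) w hw hw1 h0
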